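/- Let A be a Banach function algebra on a compact Hausdorff space X. Let x ∈ X be such that M_x factors (i.e. for every f ∈ M_x there exist g, h ∈ M_x with f = gh) and A is strongly regular at x, and let y ∈ X be such that A is strongly regular at y. Then J_x ∩ J_y is dense in M_x ∩ M_y (with respect to the norm of A). -/
import Mathlib


open Topology

/-- Let `B` be a Banach function algebra on a compact Hausdorff space `X`. If `x ∈ X`
is such that `M_x` factors and `B` is strongly regular at `x`, and `B` is strongly
regular at `y ∈ X`, then `J_x ∩ J_y` is dense in `M_x ∩ M_y` (in the norm of `B`). -/
theorem stmt_7 {X : Type*} [TopologicalSpace X] [CompactSpace X] [T2Space X]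
    {B : Type*} [NormedCommRing B] [NormedAlgebra ℂ B] [CompleteSpace B]
    (ι : B →ₐ[ℂ] C(X, ℂ)) (hι : Function.Injective ι)
    (hsep : ∀ x y : X, x ≠ y → ∃ f : B, ι f x ≠ ι f y)
    (x y : X)
    (hfac : ∀ f : B, ι f x = 0 → ∃ g h : B, ι g x = 0 ∧ ι h x = 0 ∧ f = g * h)
    (hsrx : {f : B | ι f x = 0} ⊆ closure {f : B | ∃ U ∈ 𝓝 x, ∀ z ∈ U, ι f z = 0})
    (hsry : {f : B | ι f y = 0} ⊆ closure {f : B | ∃ U ∈ 𝓝 y, ∀ z ∈ U, ι f z = 0}) :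
    {f : B | ι f x = 0 ∧ ι f y = 0} ⊆
      closure {f : B | (∃ U ∈ 𝓝 x, ∀ z ∈ U, ι f z = 0) ∧
        (∃ V ∈ 𝓝 y, ∀ z ∈ V, ι f z = 0)} := by
  intro f hf
  rcases eq_or_ne x y with rfl | hxy
  · refine closure_mono ?_ (hsrx hf.1)
    intro g hg
    exact ⟨hg, hg⟩
  -- construct s with ι s x = 1, ι s y = 0
  obtain ⟨b₀, hb₀⟩ := hsep x y hxy
  have hc0 : ι b₀ x - ι b₀ y ≠ 0 := sub_ne_zero.mpr hb₀
  set s : B := (ι b₀ x - ι b₀ y)⁻¹ • (b₀ - algebraMap ℂ B (ι b₀ y)) with hs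
  have hsx : ι s x = 1 := by
    simp only [hs, map_smul, map_sub, AlgHom.commutes, ContinuousMap.smul_apply,
      ContinuousMap.sub_apply]
    simp [smul_eq_mul, inv_mul_cancel₀ hc0]
  have hsy : ι s y = 0 := by
    simp [hs, map_smul, map_sub, AlgHom.commutes]
  have h1s : ι (1 - s) x = 0 := by simp [map_sub, hsx]
  obtain ⟨q₀, hq₀J, hq₀n⟩ :=
    Metric.mem_closure_iff.mp (hsrx h1s) (1/2) (by norm_num)
  obtain ⟨s₀, hs₀J, hs₀n⟩ :=
    Metric.mem_closure_iff.mp (hsry hsy) (1/2) (by norm_num)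
  obtain ⟨Uq, hUq, hUqv⟩ := hq₀J
  obtain ⟨Vs, hVs, hVsv⟩ := hs₀J
  rw [dist_eq_norm] at hq₀n hs₀n
  have hu : ‖(1 : B) - (q₀ + s₀)‖ < 1 := by
    have h : (1 : B) - (q₀ + s₀) = ((1 - s) - q₀) + (s - s₀) := by ring
    calc ‖(1 : B) - (q₀ + s₀)‖ = ‖((1 : B) - s - q₀) + (s - s₀)‖ := by rw [h]
      _ ≤ ‖(1 : B) - s - q₀‖ + ‖s - s₀‖ := norm_add_le _ _
      _ < 1/2 + 1/2 := by exact add_lt_add hq₀n hs₀n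
      _ = 1 := by norm_num
  set U : Bˣ := Units.oneSub ((1 : B) - (q₀ + s₀)) hu with hU
  have hUval : (U : B) = q₀ + s₀ := sub_sub_cancel 1 (q₀ + s₀)
  set v : B := ((U⁻¹ : Bˣ) : B) with hv
  have huv : (q₀ + s₀) * v = 1 := by rw [← hUval, hv, Units.mul_inv]
  set q : B := q₀ * v with hq
  have hq1 : q + s₀ * v = 1 := by rw [hq, ← add_mul, huv]
  -- q vanishes on Uq, and ι q = 1 on Vs
  have hqx : ∀ z ∈ Uq, ι q z = 0 := by
    intro z hz
    rw [hq, map_mul, ContinuousMap.mul_apply, hUqv z hz, zero_mul]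
  have hqy : ∀ z ∈ Vs, ι q z = 1 := by
    intro z hz
    have := congrArg (fun b => ι b z) hq1
    simp only [map_add, map_mul, map_one, ContinuousMap.add_apply,
      ContinuousMap.mul_apply, ContinuousMap.one_apply] at this
    rwa [hVsv z hz, zero_mul, add_zero] at this
  -- main approximation
  rw [Metric.mem_closure_iff]
  intro ε hε
  have hδpos : 0 < ε / (2 * (1 + ‖q‖)) := by positivity
  set δ := ε / (2 * (1 + ‖q‖)) with hδ
  obtain ⟨w', hw'J, hw'n⟩ := Metric.mem_closure_iff.mp (hsrx hf.1) δ hδpos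
  obtain ⟨w, hwJ, hwn⟩ := Metric.mem_closure_iff.mp (hsry hf.2) δ hδpos
  obtain ⟨Uw, hUw, hUwv⟩ := hw'J
  obtain ⟨Vw, hVw, hVwv⟩ := hwJ
  rw [dist_eq_norm] at hw'n hwn
  refine ⟨w' + (w - w') * q, ⟨⟨Uw ∩ Uq, Filter.inter_mem hUw hUq, ?_⟩,
    ⟨Vw ∩ Vs, Filter.inter_mem hVw hVs, ?_⟩⟩, ?_⟩
  · intro z hz
    simp only [map_add, map_mul, map_sub, ContinuousMap.add_apply,
      ContinuousMap.mul_apply, ContinuousMap.sub_apply]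
    rw [hUwv z hz.1, hqx z hz.2, mul_zero, add_zero]
  · intro z hz
    simp only [map_add, map_mul, map_sub, ContinuousMap.add_apply,
      ContinuousMap.mul_apply, ContinuousMap.sub_apply]
    rw [hVwv z hz.1, hqy z hz.2, mul_one, zero_sub, add_neg_cancel]
  · rw [dist_eq_norm]
    have hrw : f - (w' + (w - w') * q) = (f - w') - (w - w') * q := by ring
    have h1 : ‖(w : B) - w'‖ ≤ ‖w - f‖ + ‖f - w'‖ := norm_sub_le_norm_sub_add_norm_sub w f w'
    have h2 : ‖(w : B) - f‖ = ‖f - w‖ := norm_sub_rev _ _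
    have hq0 : (0:ℝ) ≤ ‖q‖ := norm_nonneg q
    have key : ‖f - (w' + (w - w') * q)‖ ≤ ‖f - w'‖ + ‖(w - w') * q‖ := by
      rw [hrw]; exact norm_sub_le _ _
    have hmul : ‖((w : B) - w') * q‖ ≤ ‖(w : B) - w'‖ * ‖q‖ := norm_mul_le _ _
    have hεeq : δ * (2 * (1 + ‖q‖)) = ε := by
      rw [hδ]; field_simp
    nlinarith [hw'n, hwn, norm_nonneg ((w:B) - w'), hδpos]
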